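/- For n ≥ 1, the number of left peak sets of permutations of [n] (i.e., the number of distinct values of Lpk(π) as π ranges over permutations of [n]) equals the Fibonacci number F_{n+1}, where F_1 = F_2 = 1. -/

import Mathlib

/-- A permutation: a list of distinct positive integers. -/
def IsPerm (π : List ℕ) : Prop := π.Nodup ∧ ∀ x ∈ π, 0 < x

/-- The descent set (1-indexed): `i ∈ [n-1]` with `π_i > π_{i+1}`. -/
def desSet (π : List ℕ) : Finset ℕ :=
  (Finset.Icc 1 (π.length - 1)).filter (fun i => π.getD i 0 < π.getD (i-1) 0)

/-- Number of descents. -/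
def des (π : List ℕ) : ℕ := (desSet π).card

/-- Major index: sum of descent positions. -/
def maj (π : List ℕ) : ℕ := ∑ i ∈ desSet π, i

/-- Number of peaks: `2 ≤ i ≤ n-1` with `π_{i-1} < π_i > π_{i+1}` (1-indexed). -/
def pk (π : List ℕ) : ℕ :=
  ((Finset.Icc 2 (π.length - 1)).filter (fun i =>
    π.getD (i-2) 0 < π.getD (i-1) 0 ∧ π.getD i 0 < π.getD (i-1) 0)).card

/-- Number of valleys: `2 ≤ i ≤ n-1` with `π_{i-1} > π_i < π_{i+1}` (1-indexed). -/
def valley (π : List ℕ) : ℕ :=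
  ((Finset.Icc 2 (π.length - 1)).filter (fun i =>
    π.getD (i-1) 0 < π.getD (i-2) 0 ∧ π.getD (i-1) 0 < π.getD i 0)).card

/-- The left peak set: `i ∈ [n-1]` with `π_{i-1} < π_i > π_{i+1}`, where `π_0 := 0`. -/
def lpkSet (π : List ℕ) : Finset ℕ :=
  (Finset.Icc 1 (π.length - 1)).filter (fun i =>
    (0 :: π).getD (i-1) 0 < (0 :: π).getD i 0 ∧ (0 :: π).getD (i+1) 0 < (0 :: π).getD i 0)

/-- Number of left peaks. -/
def lpk (π : List ℕ) : ℕ := (lpkSet π).card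

/-- Number of biruns (maximal monotone consecutive subsequences):
one more than the number of direction changes, for lists with at least 2 letters. -/
def br (π : List ℕ) : ℕ :=
  if π.length ≤ 1 then π.length
  else 1 + ((Finset.Icc 2 (π.length - 1)).filter (fun i =>
      (π.getD (i-2) 0 < π.getD (i-1) 0 ↔ π.getD i 0 < π.getD (i-1) 0))).card

/-- Number of up-down runs: the biruns, together with `π_1` when `π_1 > π_2`. -/
def udr (π : List ℕ) : ℕ :=
  br π + (if 2 ≤ π.length ∧ π.getD 1 0 < π.getD 0 0 then 1 else 0)

/-- The maximal increasing runs of a list. -/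
def incRuns : List ℕ → List (List ℕ)
  | [] => []
  | [a] => [[a]]
  | a :: b :: l =>
    match incRuns (b :: l) with
    | [] => [[a]]
    | r :: rs => if a < b then (a :: r) :: rs else [a] :: r :: rs

/-- Number of long runs (maximal increasing runs of length at least 2). -/
def lr (π : List ℕ) : ℕ := ((incRuns π).filter (fun r => 2 ≤ r.length)).length

/-- `1` if the initial run is long, `0` otherwise. -/
def lir (π : List ℕ) : ℕ := if 2 ≤ ((incRuns π).headD []).length then 1 else 0

/-- `1` if the final run is long, `0` otherwise. -/
def lfr (π : List ℕ) : ℕ := if 2 ≤ ((incRuns π).getLastD []).length then 1 else 0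

/-- The descent composition: the lengths of the maximal increasing runs. -/
def descComp (π : List ℕ) : List ℕ := (incRuns π).map List.length

/-- `τ` is a shuffle of `π` and `σ`: a permutation of length `|π| + |σ|`
containing both `π` and `σ` as subsequences. -/
def IsShuffle (π σ τ : List ℕ) : Prop :=
  τ.length = π.length + σ.length ∧ IsPerm τ ∧ π.Sublist τ ∧ σ.Sublist τ

open Classical in
/-- The finite set of shuffles of `π` and `σ`. -/
noncomputable def shuffles (π σ : List ℕ) : Finset (List ℕ) :=
  (π ++ σ).permutations.toFinset.filter (fun τ => IsShuffle π σ τ)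

/-- `J` is a refinement of `M` in the refinement order on weak compositions
(where `M` covers `L` when `M` is obtained from `L` by replacing two consecutive
parts by their sum): `M` is obtained by summing consecutive nonempty blocks of `J`. -/
def Refines (J M : List ℕ) : Prop :=
  ∃ P : List (List ℕ), P.flatten = J ∧ P.map List.sum = M ∧ ∀ b ∈ P, b ≠ []

/-- Successive differences, starting from `prev`. -/
def diffList : ℕ → List ℕ → List ℕ
  | _, [] => []
  | prev, a :: rest => (a - prev) :: diffList a rest

/-- `Comp(A)`: the composition of `N` determined by `A = {a₁ < ⋯ < a_j} ⊆ [N-1]`,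
namely `(a₁, a₂ - a₁, …, N - a_j)`. -/
def compOfSet (N : ℕ) (A : Finset ℕ) : List ℕ :=
  diffList 0 ((A.sort (· ≤ ·)) ++ [N])

/-- The `q`-factorial `[n]_q! = (1)(1+q)⋯(1+q+⋯+q^{n-1})`. -/
noncomputable def qFact (q : RatFunc ℚ) (n : ℕ) : RatFunc ℚ :=
  ∏ j ∈ Finset.range n, ∑ i ∈ Finset.range (j+1), q ^ i

/-- The `q`-binomial coefficient `[n choose k]_q`. -/
noncomputable def qBinom (q : RatFunc ℚ) (n k : ℕ) : RatFunc ℚ :=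
  qFact q n / (qFact q k * qFact q (n - k))

namespace LpkAux

/-- partial sums of a composition (including the total). -/
def psums : List ℕ → List ℕ
  | [] => []
  | p :: cs => p :: (psums cs).map (· + p)

/-- permutation built from a composition: blocks are increasing runs, with
descents exactly at the (proper) partial sums. -/
def build : List ℕ → List ℕ
  | [] => []
  | c :: cs => List.range' (cs.sum + 1) c ++ build cs

lemma build_length (c : List ℕ) : (build c).length = c.sum := by
  induction c with
  | nil => rfl
  | cons p cs ih => simp [build, ih, Nat.add_comm]

lemma build_perm (c : List ℕ) : (build c).Perm (List.range' 1 c.sum) := by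
  induction c with
  | nil => rfl
  | cons p cs ih =>
    have h1 : (build (p :: cs)).Perm (List.range' (cs.sum + 1) p ++ List.range' 1 cs.sum) :=
      List.Perm.append_left _ ih
    refine h1.trans (List.perm_append_comm.trans ?_)
    have h2 := List.range'_append (s := 1) (m := cs.sum) (n := p) (step := 1)
    simp only [one_mul] at h2
    rw [show (1 : ℕ) + cs.sum = cs.sum + 1 by omega] at h2
    rw [h2]
    simp [Nat.add_comm]

lemma build_mem {c : List ℕ} {x : ℕ} (hx : x ∈ build c) : 1 ≤ x ∧ x ≤ c.sum := by
  rw [(build_perm c).mem_iff] at hx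
  rw [List.mem_range'_1] at hx
  omega

lemma getD_range' (s n i : ℕ) (h : i < n) : (List.range' s n).getD i 0 = s + i := by
  rw [List.getD_eq_getElem _ _ (by simpa using h), List.getElem_range']
  omega

lemma psums_pos (c : List ℕ) (hc : ∀ x ∈ c, 0 < x) : ∀ j ∈ psums c, 0 < j := by
  induction c with
  | nil => intro j hj; simp [psums] at hj
  | cons p cs ih =>
    intro j hj
    simp only [psums, List.mem_cons, List.mem_map] at hj
    have hp : 0 < p := hc p (List.mem_cons_self)
    rcases hj with rfl | ⟨a, _, rfl⟩ <;> omega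

lemma build_step (c : List ℕ) (hc : ∀ x ∈ c, 0 < x) (i : ℕ) (h1 : 1 ≤ i) (h2 : i < c.sum) :
    if i ∈ psums c then (build c).getD i 0 < (build c).getD (i-1) 0
    else (build c).getD (i-1) 0 < (build c).getD i 0 := by
  induction c generalizing i with
  | nil => simp at h2
  | cons p cs ih =>
    have hc' : ∀ x ∈ cs, 0 < x := fun x hx => hc x (List.mem_cons_of_mem _ hx)
    have ih := fun i h1 h2 => ih hc' i h1 h2
    have hsum : (p :: cs).sum = p + cs.sum := by simp
    have hlen : (List.range' (cs.sum + 1) p).length = p := by simp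
    have hb : build (p :: cs) = List.range' (cs.sum + 1) p ++ build cs := rfl
    have hmem : i ∈ psums (p :: cs) ↔ i = p ∨ (p < i ∧ i - p ∈ psums cs) := by
      simp only [psums, List.mem_cons, List.mem_map]
      constructor
      · rintro (rfl | ⟨j, hj, rfl⟩)
        · exact Or.inl rfl
        · have := psums_pos cs hc' j hj
          exact Or.inr ⟨by omega, by simpa using hj⟩
      · rintro (rfl | ⟨hpi, hji⟩)
        · exact Or.inl rfl
        · exact Or.inr ⟨i - p, hji, by omega⟩
    rcases lt_trichotomy i p with hip | hip | hip
    · have hni : i ∉ psums (p :: cs) := by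
        rw [hmem]; rintro (rfl | ⟨h, _⟩) <;> omega
      rw [if_neg hni, hb]
      rw [List.getD_append (List.range' (cs.sum + 1) p) (build cs) 0 i (by rw [hlen]; omega),
          List.getD_append (List.range' (cs.sum + 1) p) (build cs) 0 (i-1) (by rw [hlen]; omega),
          getD_range' _ _ _ hip, getD_range' _ _ _ (by omega)]
      omega
    · subst hip
      rw [if_pos (hmem.mpr (Or.inl rfl)), hb]
      have hcs : 0 < cs.sum := by omega
      rw [List.getD_append_right (List.range' (cs.sum + 1) i) (build cs) 0 i (by rw [hlen]),
          List.getD_append (List.range' (cs.sum + 1) i) (build cs) 0 (i-1) (by rw [hlen]; omega),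
          getD_range' _ _ _ (by omega), hlen, Nat.sub_self]
      have hm0 : (build cs).getD 0 0 ∈ build cs := by
        rw [List.getD_eq_getElem _ _ (by rw [build_length]; omega)]
        exact List.getElem_mem _
      have := (build_mem hm0).2
      omega
    · have e1 : (build (p :: cs)).getD i 0 = (build cs).getD (i - p) 0 := by
        rw [hb, List.getD_append_right (List.range' (cs.sum + 1) p) (build cs) 0 i (by rw [hlen]; omega), hlen]
      have e2 : (build (p :: cs)).getD (i - 1) 0 = (build cs).getD (i - p - 1) 0 := by
        rw [hb, List.getD_append_right (List.range' (cs.sum + 1) p) (build cs) 0 (i-1) (by rw [hlen]; omega), hlen]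
        congr 1
        omega
      have hmem' : i ∈ psums (p :: cs) ↔ i - p ∈ psums cs := by
        rw [hmem]
        constructor
        · rintro (rfl | ⟨_, h⟩); omega; exact h
        · intro h; exact Or.inr ⟨hip, h⟩
      have hstep := ih (i - p) (by omega) (by omega)
      by_cases hc : i - p ∈ psums cs
      · rw [if_pos (hmem'.mpr hc), e1, e2]
        rw [if_pos hc] at hstep
        exact hstep
      · rw [if_neg (fun h => hc (hmem'.mp h)), e1, e2]
        rw [if_neg hc] at hstep
        exact hstep

lemma psums_diffList (l : List ℕ) : ∀ (prev : ℕ), List.Pairwise (· ≤ ·) (prev :: l) →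
    psums (diffList prev l) = l.map (· - prev) := by
  induction l with
  | nil => intro prev _; rfl
  | cons a rest ih =>
    intro prev h
    obtain ⟨hpre, htail⟩ := List.pairwise_cons.mp h
    have ha : prev ≤ a := hpre a (List.mem_cons_self)
    obtain ⟨htl, _⟩ := List.pairwise_cons.mp htail
    rw [show diffList prev (a :: rest) = (a - prev) :: diffList a rest from rfl]
    rw [show psums ((a - prev) :: diffList a rest)
        = (a - prev) :: (psums (diffList a rest)).map (· + (a - prev)) from rfl]
    rw [ih a htail, List.map_map, List.map_cons]
    refine congrArg _ (List.map_congr_left fun x hx => ?_)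
    have := htl x hx
    simp only [Function.comp_apply]
    omega

lemma diffList_pos (l : List ℕ) : ∀ (prev : ℕ), List.Pairwise (· < ·) (prev :: l) →
    ∀ x ∈ diffList prev l, 0 < x := by
  induction l with
  | nil => intro prev _ x hx; simp [diffList] at hx
  | cons a rest ih =>
    intro prev h x hx
    obtain ⟨hpre, htail⟩ := List.pairwise_cons.mp h
    have ha : prev < a := hpre a (List.mem_cons_self)
    rw [show diffList prev (a :: rest) = (a - prev) :: diffList a rest from rfl,
        List.mem_cons] at hx
    rcases hx with rfl | hx
    · omega
    · exact ih a htail x hx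

lemma diffList_sum (l : List ℕ) : ∀ (prev : ℕ), List.Pairwise (· ≤ ·) (prev :: l) →
    prev + (diffList prev l).sum = l.getLastD prev := by
  induction l with
  | nil => intro prev _; simp [diffList]
  | cons a rest ih =>
    intro prev h
    obtain ⟨hpre, htail⟩ := List.pairwise_cons.mp h
    have ha : prev ≤ a := hpre a (List.mem_cons_self)
    have := ih a htail
    rw [show diffList prev (a :: rest) = (a - prev) :: diffList a rest from rfl]
    rw [List.sum_cons, List.getLastD_cons]
    omega

end LpkAux
namespace LpkAux

lemma lpk_nonadj (l : List ℕ) : ∀ i ∈ lpkSet l, i + 1 ∉ lpkSet l := by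
  intro i hi hi1
  simp only [lpkSet, Finset.mem_filter] at hi hi1
  have h1 := hi.2.2
  have h2 := hi1.2.1
  rw [show i + 1 - 1 = i from rfl] at h2
  omega

lemma pairwise_sort_concat (n : ℕ) (hn : 1 ≤ n) (A : Finset ℕ) (hA : A ⊆ Finset.Icc 1 (n-1)) :
    List.Pairwise (· < ·) (0 :: (A.sort (· ≤ ·) ++ [n])) := by
  have hmem : ∀ x ∈ A.sort (· ≤ ·), 1 ≤ x ∧ x ≤ n - 1 := by
    intro x hx
    have := hA ((Finset.mem_sort _).mp hx)
    simpa [Finset.mem_Icc] using this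
  rw [List.pairwise_cons]
  constructor
  · intro x hx
    rcases List.mem_append.mp hx with hx | hx
    · have := hmem x hx; omega
    · simp at hx; omega
  · rw [List.pairwise_append]
    refine ⟨(Finset.sortedLT_sort A).pairwise, List.pairwise_singleton _ _, ?_⟩
    intro x hx y hy
    simp at hy
    subst hy
    have := hmem x hx
    omega

lemma lpkSet_build (n : ℕ) (hn : 1 ≤ n) (A : Finset ℕ) (hA : A ⊆ Finset.Icc 1 (n-1))
    (hadj : ∀ i ∈ A, i + 1 ∉ A) :
    (build (compOfSet n A)).Perm (List.range' 1 n) ∧ lpkSet (build (compOfSet n A)) = A := by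
  set c := compOfSet n A with hc
  have hsubA : ∀ x ∈ A, 1 ≤ x ∧ x ≤ n - 1 := by
    intro x hx
    have := hA hx
    simpa [Finset.mem_Icc] using this
  have hpwlt := pairwise_sort_concat n hn A hA
  have hpwle : List.Pairwise (· ≤ ·) (0 :: (A.sort (· ≤ ·) ++ [n])) :=
    hpwlt.imp le_of_lt
  have hcpos : ∀ x ∈ c, 0 < x := by
    rw [hc]
    exact diffList_pos _ 0 hpwlt
  have hcsum : c.sum = n := by
    have := diffList_sum (A.sort (· ≤ ·) ++ [n]) 0 hpwle
    rw [List.getLastD_concat] at this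
    rw [hc]
    unfold compOfSet
    omega
  have hps : ∀ i, i ∈ psums c ↔ (i ∈ A ∨ i = n) := by
    intro i
    rw [hc, show compOfSet n A = diffList 0 (A.sort (· ≤ ·) ++ [n]) from rfl,
        psums_diffList _ 0 hpwle]
    simp [Finset.mem_sort]
  have hlen : (build c).length = n := by rw [build_length, hcsum]
  have hperm : (build c).Perm (List.range' 1 n) := by
    rw [← hcsum]; exact build_perm c
  refine ⟨hperm, ?_⟩
  ext i
  simp only [lpkSet, Finset.mem_filter, Finset.mem_Icc, hlen]
  constructor
  · rintro ⟨⟨hi1, hi2⟩, _, hc2⟩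
    obtain ⟨j, rfl⟩ : ∃ j, i = j + 1 := ⟨i - 1, by omega⟩
    have hd : (build c).getD (j+1) 0 < (build c).getD j 0 := by
      simpa [List.getD_cons_succ] using hc2
    have hstep := build_step c hcpos (j+1) (by omega) (by omega)
    by_cases hmem : (j+1) ∈ psums c
    · rcases (hps _).mp hmem with h | h
      · exact h
      · omega
    · rw [if_neg hmem] at hstep
      simp only [Nat.add_sub_cancel] at hstep
      omega
  · intro hiA
    have hi := hsubA i hiA
    obtain ⟨j, rfl⟩ : ∃ j, i = j + 1 := ⟨i - 1, by omega⟩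
    have hn2 : 2 ≤ n := by omega
    refine ⟨⟨by omega, by omega⟩, ?_, ?_⟩
    · rcases Nat.eq_zero_or_pos j with rfl | hj
      · simp only [List.getD_cons_succ, List.getD_cons_zero]
        have hmem0 : (build c).getD 0 0 ∈ build c := by
          rw [List.getD_eq_getElem _ _ (by omega)]
          exact List.getElem_mem _
        exact (build_mem hmem0).1
      · obtain ⟨k, rfl⟩ : ∃ k, j = k + 1 := ⟨j - 1, by omega⟩
        simp only [List.getD_cons_succ]
        have hstep := build_step c hcpos (k+1) (by omega) (by omega)
        have hnm : (k+1) ∉ psums c := by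
          rw [hps]
          rintro (h | h)
          · exact hadj _ h (by simpa using hiA)
          · omega
        rw [if_neg hnm] at hstep
        simpa using hstep
    · simp only [List.getD_cons_succ]
      have hstep := build_step c hcpos (j+1) (by omega) (by omega)
      rw [if_pos ((hps _).mpr (Or.inl hiA))] at hstep
      simpa using hstep

/-- subsets of `[1, m]` with no two adjacent elements. -/
def nonadjSets (m : ℕ) : Finset (Finset ℕ) :=
  (Finset.Icc 1 m).powerset.filter (fun A => ∀ i ∈ A, i + 1 ∉ A)

lemma card_nonadjSets : ∀ m, (nonadjSets m).card = Nat.fib (m + 2)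
  | 0 => by decide
  | 1 => by decide
  | (m+2) => by
    have h1 := card_nonadjSets (m+1)
    have h0 := card_nonadjSets m
    classical
    have hsplit := Finset.card_filter_add_card_filter_not
      (s := nonadjSets (m+2)) (fun A => (m+2) ∈ A)
    have e1 : (nonadjSets (m+2)).filter (fun A => ¬ (m+2) ∈ A) = nonadjSets (m+1) := by
      ext A
      simp only [nonadjSets, Finset.mem_filter, Finset.mem_powerset]
      constructor
      · rintro ⟨⟨hsub, hadj⟩, hnm⟩
        refine ⟨fun x hx => ?_, hadj⟩
        have hb := hsub hx
        simp only [Finset.mem_Icc] at hb ⊢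
        have : x ≠ m + 2 := fun h => hnm (h ▸ hx)
        omega
      · rintro ⟨hsub, hadj⟩
        have hnm : (m+2) ∉ A := by
          intro h
          have := hsub h
          simp [Finset.mem_Icc] at this
        refine ⟨⟨fun x hx => ?_, hadj⟩, hnm⟩
        have := hsub hx
        simp only [Finset.mem_Icc] at this ⊢
        omega
    have e2 : (nonadjSets (m+2)).filter (fun A => (m+2) ∈ A)
        = (nonadjSets m).image (insert (m+2)) := by
      ext A
      simp only [nonadjSets, Finset.mem_filter, Finset.mem_powerset, Finset.mem_image]
      constructor
      · rintro ⟨⟨hsub, hadj⟩, hm⟩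
        refine ⟨A.erase (m+2), ⟨fun x hx => ?_, fun i hi hcon => ?_⟩, Finset.insert_erase hm⟩
        · have hx' := Finset.mem_of_mem_erase hx
          have hne := Finset.ne_of_mem_erase hx
          have hb := hsub hx'
          simp only [Finset.mem_Icc] at hb ⊢
          have hxm1 : x ≠ m + 1 := by
            rintro rfl
            exact hadj _ hx' hm
          omega
        · exact hadj i (Finset.mem_of_mem_erase hi) (Finset.mem_of_mem_erase hcon)
      · rintro ⟨B, ⟨hsub, hadj⟩, rfl⟩
        have hBm : ∀ x ∈ B, 1 ≤ x ∧ x ≤ m := by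
          intro x hx
          have := hsub hx
          simpa [Finset.mem_Icc] using this
        refine ⟨⟨?_, ?_⟩, Finset.mem_insert_self _ _⟩
        · intro x hx
          rcases Finset.mem_insert.mp hx with rfl | hx
          · simp only [Finset.mem_Icc]; omega
          · have := hBm x hx
            simp only [Finset.mem_Icc]; omega
        · intro i hi hcon
          rcases Finset.mem_insert.mp hi with rfl | hi
          · rcases Finset.mem_insert.mp hcon with h | h
            · omega
            · have := hBm _ h; omega
          · rcases Finset.mem_insert.mp hcon with h | h
            · have := hBm _ hi; omega
            · exact hadj i hi h
    have hinj : Set.InjOn (insert (m+2)) (↑(nonadjSets m) : Set (Finset ℕ)) := by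
      intro B1 h1 B2 h2 he
      have key : ∀ B : Finset ℕ, B ∈ nonadjSets m → (m+2) ∉ B := by
        intro B hB hm
        simp only [nonadjSets, Finset.mem_filter, Finset.mem_powerset] at hB
        have := hB.1 hm
        simp [Finset.mem_Icc] at this
      rw [← Finset.erase_insert (key B1 (by simpa using h1)), ← Finset.erase_insert (key B2 (by simpa using h2)), he]
    have himg := Finset.card_image_of_injOn hinj
    rw [e1] at hsplit
    rw [e2, himg] at hsplit
    have : Nat.fib (m + 2 + 2) = Nat.fib (m + 2) + Nat.fib (m + 1 + 2) := by
      rw [show m + 2 + 2 = (m + 2) + 2 from rfl, Nat.fib_add_two]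
    omega

end LpkAux

/-- The number of distinct left peak sets of permutations of `[n]` is the
Fibonacci number `F_{n+1}` (with `F_1 = F_2 = 1`). -/
theorem card_lpkSets (n : ℕ) (hn : 1 ≤ n) :
    {A : Finset ℕ | ∃ π : List ℕ, π.Perm (List.range' 1 n) ∧ lpkSet π = A}.ncard =
      Nat.fib (n + 1) := by
  classical
  have hset : {A : Finset ℕ | ∃ π : List ℕ, π.Perm (List.range' 1 n) ∧ lpkSet π = A}
      = ↑(LpkAux.nonadjSets (n-1)) := by
    ext A
    simp only [Set.mem_setOf_eq, Finset.mem_coe, LpkAux.nonadjSets, Finset.mem_filter,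
      Finset.mem_powerset]
    constructor
    · rintro ⟨π, hπ, rfl⟩
      have hl : π.length = n := by rw [hπ.length_eq, List.length_range']
      constructor
      · have hsub : lpkSet π ⊆ Finset.Icc 1 (π.length - 1) := by
          unfold lpkSet
          exact Finset.filter_subset _ _
        rwa [hl] at hsub
      · exact LpkAux.lpk_nonadj π
    · rintro ⟨hsub, hadj⟩
      obtain ⟨hperm, hlpk⟩ := LpkAux.lpkSet_build n hn A hsub hadj
      exact ⟨_, hperm, hlpk⟩
  rw [hset, Set.ncard_coe_finset, LpkAux.card_nonadjSets]
  congr 1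
  omega
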